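/- For every relational vocabulary σ and every integer k ≥ 1, the triple (P_k, ε, (·)*) is a comonad in Kleisli form on the category of σ-structures and homomorphisms: for every σ-structure 𝒜 the counit ε_𝒜 : P_k 𝒜 → 𝒜 is a homomorphism; for every homomorphism f : P_k 𝒜 → ℬ the coextension f* : P_k 𝒜 → P_k ℬ is a homomorphism; and the equations (ε_𝒜)* = id_{P_k 𝒜}, ε_ℬ ∘ f* = f, and (g ∘ f*)* = g* ∘ f* hold for all homomorphisms f : P_k 𝒜 → ℬ and g : P_k ℬ → 𝒞. -/

import Mathlib

/-- A relational vocabulary: a type of relation symbols with arities. -/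
structure RelVocab : Type 1 where
  Rel : Type
  ar : Rel → ℕ

/-- A structure for a relational vocabulary. -/
structure RelStruct (σ : RelVocab) : Type 1 where
  carrier : Type
  rel : ∀ R : σ.Rel, (Fin (σ.ar R) → carrier) → Prop

/-- Homomorphisms of relational structures. -/
def IsHom {σ : RelVocab} (𝒜 ℬ : RelStruct σ) (h : 𝒜.carrier → ℬ.carrier) : Prop :=
  ∀ (R : σ.Rel) (v : Fin (σ.ar R) → 𝒜.carrier), 𝒜.rel R v → ℬ.rel R (fun i => h (v i))

/-- Nonempty sequences of (pebble index, element) pairs: the universe of `P_k 𝒜`. -/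
def PkC (k : ℕ) (A : Type) : Type :=
  {l : List (Fin k × A) // l ≠ []}

/-- The last move of a play. -/
def plast {k : ℕ} {A : Type} (s : PkC k A) : Fin k × A :=
  s.1.getLast s.2

/-- The counit: the element of the last move. -/
def peps {k : ℕ} {A : Type} (s : PkC k A) : A :=
  (plast s).2

/-- Comparability in the prefix order. -/
def Cmp {A : Type} (s t : List A) : Prop :=
  s <+: t ∨ t <+: s

/-- The pebbling comonad `P_k` on structures. -/
def Pk {σ : RelVocab} (k : ℕ) (𝒜 : RelStruct σ) : RelStruct σ where
  carrier := PkC k 𝒜.carrier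
  rel R v :=
    (∀ i j, Cmp (v i).1 (v j).1) ∧
    (∀ i j (u : List (Fin k × 𝒜.carrier)), (v j).1 = (v i).1 ++ u →
      (plast (v i)).1 ∉ u.map Prod.fst) ∧
    𝒜.rel R (fun i => peps (v i))

/-- The prefix of `s` of length `i+1`. -/
def pPrefAt {k : ℕ} {A : Type} (s : PkC k A) (i : Fin s.1.length) : PkC k A :=
  ⟨s.1.take (i + 1), by
    apply List.ne_nil_of_length_pos
    rw [List.length_take]
    exact lt_min (Nat.succ_pos _) (Nat.lt_of_le_of_lt (Nat.zero_le _) i.2)⟩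

/-- The Kleisli coextension for the pebbling comonad. -/
def pcoext {k : ℕ} {A B : Type} (f : PkC k A → B) (s : PkC k A) : PkC k B :=
  ⟨List.ofFn (fun i : Fin s.1.length => ((s.1.get i).1, f (pPrefAt s i))), by
    apply List.ne_nil_of_length_pos
    rw [List.length_ofFn]
    exact List.length_pos_iff.mpr s.2⟩

lemma pcoext_length {k : ℕ} {A B : Type} (f : PkC k A → B) (s : PkC k A) :
    (pcoext f s).1.length = s.1.length := by simp [pcoext]

lemma pcoext_getElem {k : ℕ} {A B : Type} (f : PkC k A → B) (s : PkC k A) (i : ℕ)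
    (h : i < s.1.length) (h' : i < (pcoext f s).1.length) :
    (pcoext f s).1[i] = ((s.1[i]).1, f (pPrefAt s ⟨i, h⟩)) := by
  simp [pcoext, List.getElem_ofFn]

lemma spos {k : ℕ} {A : Type} (s : PkC k A) : 0 < s.1.length := List.length_pos_iff.mpr s.2

lemma pPrefAt_last {k : ℕ} {A : Type} (s : PkC k A) (h : s.1.length - 1 < s.1.length) :
    pPrefAt s ⟨s.1.length - 1, h⟩ = s := by
  apply Subtype.ext
  show s.1.take (s.1.length - 1 + 1) = s.1
  rw [Nat.sub_add_cancel (spos s), List.take_length]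

lemma plast_pcoext {k : ℕ} {A B : Type} (f : PkC k A → B) (s : PkC k A) :
    plast (pcoext f s) = ((plast s).1, f s) := by
  have h : s.1.length - 1 < s.1.length := Nat.sub_lt (spos s) one_pos
  unfold plast
  rw [List.getLast_eq_getElem, List.getLast_eq_getElem]
  simp only [pcoext_length]
  rw [pcoext_getElem f s (s.1.length - 1) h (by rw [pcoext_length]; exact h), pPrefAt_last]

lemma peps_pcoext {k : ℕ} {A B : Type} (f : PkC k A → B) (s : PkC k A) :
    peps (pcoext f s) = f s := by rw [peps, plast_pcoext]

lemma pPrefAt_pPrefAt {k : ℕ} {A : Type} (s : PkC k A) (i j : ℕ) (hij : i ≤ j)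
    (hj : j < s.1.length) (hi : i < (pPrefAt s ⟨j, hj⟩).1.length) :
    pPrefAt (pPrefAt s ⟨j, hj⟩) ⟨i, hi⟩ = pPrefAt s ⟨i, lt_of_le_of_lt hij hj⟩ := by
  apply Subtype.ext
  show (s.1.take (j+1)).take (i+1) = s.1.take (i+1)
  rw [List.take_take, min_eq_left (by omega)]

lemma pcoext_pPrefAt {k : ℕ} {A B : Type} (f : PkC k A → B) (s : PkC k A) (i : ℕ)
    (h : i < s.1.length) :
    (pcoext f (pPrefAt s ⟨i, h⟩)).1 = (pcoext f s).1.take (i + 1) := by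
  apply List.ext_getElem
  · rw [pcoext_length, List.length_take, pcoext_length]
    show (s.1.take (i+1)).length = _
    rw [List.length_take]
  · intro n h1 h2
    have hlp : (pPrefAt s ⟨i, h⟩).1.length = min (i+1) s.1.length := by
      show (s.1.take (i+1)).length = _; rw [List.length_take]
    have hn : n < (pPrefAt s ⟨i, h⟩).1.length := by rwa [pcoext_length] at h1
    have hni : n ≤ i := by rw [hlp] at hn; omega
    have hns : n < s.1.length := lt_of_le_of_lt hni h
    rw [pcoext_getElem f _ n hn h1, List.getElem_take,
        pcoext_getElem f s n hns (by rwa [pcoext_length]),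
        pPrefAt_pPrefAt s n i hni h hn]
    have heq : (pPrefAt s ⟨i, h⟩).1[n]'hn = s.1[n]'hns := List.getElem_take
    rw [heq]

lemma pcoext_prefix {k : ℕ} {A B : Type} (f : PkC k A → B) (s t : PkC k A)
    (hst : s.1 <+: t.1) : (pcoext f s).1 <+: (pcoext f t).1 := by
  have hl : s.1.length ≤ t.1.length := hst.length_le
  have h : s.1.length - 1 < t.1.length := by have := spos s; omega
  have hs : s = pPrefAt t ⟨s.1.length - 1, h⟩ := by
    apply Subtype.ext
    show s.1 = t.1.take (s.1.length - 1 + 1)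
    rw [Nat.sub_add_cancel (spos s)]
    exact List.prefix_iff_eq_take.mp hst
  rw [hs, pcoext_pPrefAt]
  exact List.take_prefix _ _

lemma pcoext_map_fst {k : ℕ} {A B : Type} (f : PkC k A → B) (s : PkC k A) :
    (pcoext f s).1.map Prod.fst = s.1.map Prod.fst := by
  apply List.ext_getElem
  · simp [pcoext_length]
  · intro n h1 h2
    have hn : n < s.1.length := by simpa using h2
    rw [List.getElem_map, List.getElem_map,
        pcoext_getElem f s n hn (by rwa [pcoext_length])]

lemma peps_pPrefAt {k : ℕ} {A : Type} (s : PkC k A) (n : ℕ) (hn : n < s.1.length) :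
    peps (pPrefAt s ⟨n, hn⟩) = (s.1[n]).2 := by
  unfold peps plast
  rw [List.getLast_eq_getElem]
  have hlen : (pPrefAt s ⟨n, hn⟩).1.length = n + 1 := by
    show (s.1.take (n+1)).length = n + 1
    rw [List.length_take, min_eq_left (by omega)]
  have h2 : (pPrefAt s ⟨n, hn⟩).1.length - 1 = n := by omega
  have : (pPrefAt s ⟨n, hn⟩).1[(pPrefAt s ⟨n, hn⟩).1.length - 1]'(by omega) =
      (pPrefAt s ⟨n, hn⟩).1[n]'(by omega) := by congr 1
  rw [this]
  have hg : (pPrefAt s ⟨n, hn⟩).1[n]'(by omega) = s.1[n]'hn := List.getElem_take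
  rw [hg]

lemma pPrefAt_eq_pcoext_pPrefAt {k : ℕ} {A B : Type} (f : PkC k A → B) (s : PkC k A)
    (n : ℕ) (hn : n < s.1.length) (hn' : n < (pcoext f s).1.length) :
    pPrefAt (pcoext f s) ⟨n, hn'⟩ = pcoext f (pPrefAt s ⟨n, hn⟩) := by
  apply Subtype.ext
  show (pcoext f s).1.take (n+1) = _
  rw [pcoext_pPrefAt]

theorem stmt2 (σ : RelVocab) (k : ℕ) (hk : 1 ≤ k) :
    (∀ 𝒜 : RelStruct σ, IsHom (Pk k 𝒜) 𝒜 peps) ∧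
    (∀ (𝒜 ℬ : RelStruct σ) (f : PkC k 𝒜.carrier → ℬ.carrier),
      IsHom (Pk k 𝒜) ℬ f → IsHom (Pk k 𝒜) (Pk k ℬ) (pcoext f)) ∧
    (∀ 𝒜 : RelStruct σ, pcoext (peps : PkC k 𝒜.carrier → 𝒜.carrier) = id) ∧
    (∀ (𝒜 ℬ : RelStruct σ) (f : PkC k 𝒜.carrier → ℬ.carrier), IsHom (Pk k 𝒜) ℬ f →
      (fun s => peps (pcoext f s)) = f) ∧
    (∀ (𝒜 ℬ 𝒞 : RelStruct σ) (f : PkC k 𝒜.carrier → ℬ.carrier)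
      (g : PkC k ℬ.carrier → 𝒞.carrier), IsHom (Pk k 𝒜) ℬ f → IsHom (Pk k ℬ) 𝒞 g →
      pcoext (fun s => g (pcoext f s)) = fun s => pcoext g (pcoext f s)) := by
  refine ⟨?_, ?_, ?_, ?_, ?_⟩
  · intro 𝒜 R v hv
    exact hv.2.2
  · intro 𝒜 ℬ f hf R v hv
    obtain ⟨hc, hp, hr⟩ := hv
    refine ⟨?_, ?_, ?_⟩
    · intro i j
      rcases hc i j with h | h
      · exact Or.inl (pcoext_prefix f _ _ h)
      · exact Or.inr (pcoext_prefix f _ _ h)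
    · intro i j u hu
      have hmap := congrArg (List.map Prod.fst) hu
      rw [List.map_append] at hmap
      erw [pcoext_map_fst, pcoext_map_fst] at hmap
      rcases hc i j with h | h
      · obtain ⟨w, hw⟩ := h
        have hw' : (v j).1 = (v i).1 ++ w := hw.symm
        have hmap2 : (v i).1.map Prod.fst ++ w.map Prod.fst
            = (v i).1.map Prod.fst ++ u.map Prod.fst := by
          rw [← List.map_append, ← hw', hmap]
        have huw : u.map Prod.fst = w.map Prod.fst :=
          (List.append_cancel_left hmap2).symm
        show (plast (pcoext f (v i))).1 ∉ u.map Prod.fst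
        erw [plast_pcoext, huw]
        exact hp i j w hw'
      · have hlen := congrArg List.length hu
        rw [List.length_append] at hlen
        erw [pcoext_length, pcoext_length] at hlen
        have : u = [] := by
          have := h.length_le
          have : u.length = 0 := by omega
          exact List.eq_nil_of_length_eq_zero this
        subst this
        simp
    · show ℬ.rel R (fun i => peps (pcoext f (v i)))
      have e : (fun i => peps (pcoext f (v i))) = fun i => f (v i) :=
        funext fun i => peps_pcoext f (v i)
      rw [e]
      exact hf R v ⟨hc, hp, hr⟩
  · intro 𝒜
    funext s
    apply Subtype.ext
    apply List.ext_getElem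
    · rw [pcoext_length]; rfl
    · intro n h1 h2
      have hn : n < s.1.length := by rwa [pcoext_length] at h1
      rw [pcoext_getElem _ s n hn h1, peps_pPrefAt s n hn]
      rfl
  · intro 𝒜 ℬ f hf
    funext s
    exact peps_pcoext f s
  · intro 𝒜 ℬ 𝒞 f g hf hg
    funext s
    apply Subtype.ext
    apply List.ext_getElem
    · rw [pcoext_length, pcoext_length, pcoext_length]
    · intro n h1 h2
      have hn : n < s.1.length := by rwa [pcoext_length] at h1
      have hn' : n < (pcoext f s).1.length := by rwa [pcoext_length]
      rw [pcoext_getElem _ s n hn h1,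
          pcoext_getElem g (pcoext f s) n hn' h2,
          pcoext_getElem f s n hn hn',
          pPrefAt_eq_pcoext_pPrefAt f s n hn hn']
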